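/- Let Ȧ₁ and Ȧ₂ be densely defined closed symmetric operators with deficiency indices (1,1) on complex Hilbert spaces H₁ and H₂, and let g₊ᵏ ∈ ker((Ȧₖ)* − i), g₋ᵏ ∈ ker((Ȧₖ)* + i) be unit vectors, k = 1,2. For α, β ∈ [0, π) set f = (sin α · g₊¹ − sin β · g₋¹) ⊕ (cos α · g₊² − cos β · g₋²) ∈ H₁ ⊕ H₂. Then f ∈ Dom((Ȧ₁ ⊕ Ȧ₂)*) and Im⟨(Ȧ₁ ⊕ Ȧ₂)* f, f⟩ = 0; consequently the restriction Ȧ of (Ȧ₁ ⊕ Ȧ₂)* to Dom(Ȧ₁) ⊕ Dom(Ȧ₂) ∔ span{f} is a symmetric operator. -/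

import Mathlib

noncomputable section

open Complex

/-- The inner product, linear in the **first** argument (the convention of the paper). -/
def ip {H : Type*} [NormedAddCommGroup H] [InnerProductSpace ℂ H] (x y : H) : ℂ :=
  @inner ℂ H _ y x

variable {H H₁ H₂ : Type*}
  [NormedAddCommGroup H] [InnerProductSpace ℂ H] [CompleteSpace H]
  [NormedAddCommGroup H₁] [InnerProductSpace ℂ H₁] [CompleteSpace H₁]
  [NormedAddCommGroup H₂] [InnerProductSpace ℂ H₂] [CompleteSpace H₂]

/-- The deficiency subspace `ker (T* - z)` of a densely defined operator `T`,
as a subset of the ambient space. -/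
def defSet (T : H →ₗ.[ℂ] H) (z : ℂ) : Set H :=
  {g | ∃ hg : g ∈ T.adjoint.domain, T.adjoint ⟨g, hg⟩ = z • g}

/-- `g` is a nonzero vector spanning the deficiency subspace `ker (T* - z)`. -/
def SpansDefSet (T : H →ₗ.[ℂ] H) (z : ℂ) (g : H) : Prop :=
  g ≠ 0 ∧ defSet T z = {h | ∃ c : ℂ, h = c • g}

/-- `T` has deficiency indices `(1,1)`. -/
def HasDefIndicesOneOne (T : H →ₗ.[ℂ] H) : Prop :=
  (∃ g, SpansDefSet T I g) ∧ (∃ g, SpansDefSet T (-I) g)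

/-- A partially defined operator is symmetric. -/
def IsSymmetricOp (T : H →ₗ.[ℂ] H) : Prop :=
  ∀ x y : T.domain, ip (T x) (y : H) = ip (x : H) (T y)

/-- A partially defined operator is self-adjoint. -/
def IsSelfAdjointOp (T : H →ₗ.[ℂ] H) : Prop :=
  Dense (T.domain : Set H) ∧ T.adjoint = T

/-- A partially defined operator is dissipative: `Im ⟨T x, x⟩ ≥ 0`. -/
def IsDissipativeOp (T : H →ₗ.[ℂ] H) : Prop :=
  ∀ x : T.domain, 0 ≤ (ip (T x) (x : H)).im

/-- A partially defined operator is maximal dissipative: it is dissipative and admits no proper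
dissipative extension. -/
def IsMaximalDissipativeOp (T : H →ₗ.[ℂ] H) : Prop :=
  IsDissipativeOp T ∧ ∀ S : H →ₗ.[ℂ] H, IsDissipativeOp S → T ≤ S → S = T

/-- The domain of the direct (orthogonal) sum of two partially defined operators. -/
def prodDomain (T₁ : H₁ →ₗ.[ℂ] H₁) (T₂ : H₂ →ₗ.[ℂ] H₂) :
    Submodule ℂ (WithLp 2 (H₁ × H₂)) where
  carrier := {x | x.fst ∈ T₁.domain ∧ x.snd ∈ T₂.domain}
  add_mem' := fun ha hb => ⟨Submodule.add_mem _ ha.1 hb.1, Submodule.add_mem _ ha.2 hb.2⟩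
  zero_mem' := ⟨Submodule.zero_mem _, Submodule.zero_mem _⟩
  smul_mem' := fun c x hx => ⟨Submodule.smul_mem _ c hx.1, Submodule.smul_mem _ c hx.2⟩

/-- First-component projection of the domain of a direct sum. -/
def fstD (T₁ : H₁ →ₗ.[ℂ] H₁) (T₂ : H₂ →ₗ.[ℂ] H₂) :
    ↥(prodDomain T₁ T₂) →ₗ[ℂ] T₁.domain where
  toFun x := ⟨x.val.fst, x.prop.1⟩
  map_add' _ _ := rfl
  map_smul' _ _ := rfl

/-- Second-component projection of the domain of a direct sum. -/
def sndD (T₁ : H₁ →ₗ.[ℂ] H₁) (T₂ : H₂ →ₗ.[ℂ] H₂) :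
    ↥(prodDomain T₁ T₂) →ₗ[ℂ] T₂.domain where
  toFun x := ⟨x.val.snd, x.prop.2⟩
  map_add' _ _ := rfl
  map_smul' _ _ := rfl

/-- The direct (orthogonal) sum `T₁ ⊕ T₂` of two partially defined operators, acting
componentwise on `Dom T₁ ⊕ Dom T₂ ⊆ H₁ ⊕ H₂`. -/
def prodOp (T₁ : H₁ →ₗ.[ℂ] H₁) (T₂ : H₂ →ₗ.[ℂ] H₂) :
    WithLp 2 (H₁ × H₂) →ₗ.[ℂ] WithLp 2 (H₁ × H₂) where
  domain := prodDomain T₁ T₂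
  toFun := (WithLp.linearEquiv 2 ℂ (H₁ × H₂)).symm.toLinearMap ∘ₗ
    ((T₁.toFun ∘ₗ fstD T₁ T₂).prod (T₂.toFun ∘ₗ sndD T₁ T₂))

/-- The canonical embedding of `H₁` into `H₁ ⊕ H₂`. -/
def embFst (x : H₁) : WithLp 2 (H₁ × H₂) := (WithLp.equiv 2 (H₁ × H₂)).symm (x, 0)

/-- Builds an element of `H₁ ⊕ H₂` from components. -/
def pairL2 (x : H₁) (y : H₂) : WithLp 2 (H₁ × H₂) := (WithLp.equiv 2 (H₁ × H₂)).symm (x, y)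

lemma prodOp_apply' (T₁ : H₁ →ₗ.[ℂ] H₁) (T₂ : H₂ →ₗ.[ℂ] H₂) (x : (prodOp T₁ T₂).domain) :
    prodOp T₁ T₂ x = pairL2 (T₁ ⟨x.1.fst, x.2.1⟩) (T₂ ⟨x.1.snd, x.2.2⟩) := rfl

lemma pairL2_fst (x : H₁) (y : H₂) : (pairL2 x y).fst = x := rfl
lemma pairL2_snd (x : H₁) (y : H₂) : (pairL2 x y).snd = y := rfl

lemma dense_prodDomain (T₁ : H₁ →ₗ.[ℂ] H₁) (T₂ : H₂ →ₗ.[ℂ] H₂)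
    (h₁ : Dense (T₁.domain : Set H₁)) (h₂ : Dense (T₂.domain : Set H₂)) :
    Dense ((prodOp T₁ T₂).domain : Set (WithLp 2 (H₁ × H₂))) := by
  have hdr : DenseRange ⇑(WithLp.prodContinuousLinearEquiv 2 ℂ H₁ H₂).symm :=
    (WithLp.prodContinuousLinearEquiv 2 ℂ H₁ H₂).symm.surjective.denseRange
  have h := hdr.dense_image (WithLp.prodContinuousLinearEquiv 2 ℂ H₁ H₂).symm.continuous
    (h₁.prod h₂)
  have himg : ⇑(WithLp.prodContinuousLinearEquiv 2 ℂ H₁ H₂).symm ''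
      ((T₁.domain : Set H₁) ×ˢ (T₂.domain : Set H₂)) =
      ((prodOp T₁ T₂).domain : Set (WithLp 2 (H₁ × H₂))) := by
    ext x
    constructor
    · rintro ⟨y, hy, rfl⟩
      exact ⟨hy.1, hy.2⟩
    · intro hx
      exact ⟨x.ofLp, ⟨hx.1, hx.2⟩, rfl⟩
  rwa [himg] at h

lemma pair_mem_adjoint_domain (T₁ : H₁ →ₗ.[ℂ] H₁) (T₂ : H₂ →ₗ.[ℂ] H₂)
    (h₁ : Dense (T₁.domain : Set H₁)) (h₂ : Dense (T₂.domain : Set H₂))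
    {x₁ : H₁} {x₂ : H₂} (hx₁ : x₁ ∈ T₁.adjoint.domain) (hx₂ : x₂ ∈ T₂.adjoint.domain) :
    ∃ h : pairL2 x₁ x₂ ∈ (prodOp T₁ T₂).adjoint.domain,
      (prodOp T₁ T₂).adjoint ⟨pairL2 x₁ x₂, h⟩ =
        pairL2 (T₁.adjoint ⟨x₁, hx₁⟩) (T₂.adjoint ⟨x₂, hx₂⟩) := by
  have hA : Dense ((prodOp T₁ T₂).domain : Set (WithLp 2 (H₁ × H₂))) :=
    dense_prodDomain T₁ T₂ h₁ h₂
  set w : WithLp 2 (H₁ × H₂) := pairL2 (T₁.adjoint ⟨x₁, hx₁⟩) (T₂.adjoint ⟨x₂, hx₂⟩) with hw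
  have key : ∀ u : (prodOp T₁ T₂).domain,
      (inner ℂ w (u : WithLp 2 (H₁ × H₂)) : ℂ) = inner ℂ (pairL2 x₁ x₂) (prodOp T₁ T₂ u) := by
    intro u
    have e1 := LinearPMap.adjoint_isFormalAdjoint h₁ ⟨x₁, hx₁⟩ ⟨u.1.fst, u.2.1⟩
    have e2 := LinearPMap.adjoint_isFormalAdjoint h₂ ⟨x₂, hx₂⟩ ⟨u.1.snd, u.2.2⟩
    show (inner ℂ (T₁.adjoint ⟨x₁, hx₁⟩ : H₁)
        (((⟨u.1.fst, u.2.1⟩ : T₁.domain) : H₁)) : ℂ) +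
        (inner ℂ (T₂.adjoint ⟨x₂, hx₂⟩ : H₂) (((⟨u.1.snd, u.2.2⟩ : T₂.domain) : H₂)) : ℂ) =
        (inner ℂ x₁ (T₁ ⟨u.1.fst, u.2.1⟩) : ℂ) + (inner ℂ x₂ (T₂ ⟨u.1.snd, u.2.2⟩) : ℂ)
    rw [e1, e2]
  have hmem : pairL2 x₁ x₂ ∈ (prodOp T₁ T₂).adjoint.domain :=
    LinearPMap.mem_adjoint_domain_of_exists _ ⟨w, key⟩
  exact ⟨hmem, LinearPMap.adjoint_apply_eq hA _ key⟩

/-- If `Ȧ₁, Ȧ₂` are densely defined closed symmetric operators with deficiency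
indices `(1,1)` and `g₊ᵏ, g₋ᵏ` are unit deficiency vectors, then for `α, β ∈ [0, π)` the vector
`f = (sin α g₊¹ − sin β g₋¹) ⊕ (cos α g₊² − cos β g₋²)` lies in `Dom((Ȧ₁ ⊕ Ȧ₂)*)`,
`Im ⟨(Ȧ₁ ⊕ Ȧ₂)* f, f⟩ = 0`, and the restriction of `(Ȧ₁ ⊕ Ȧ₂)*` to
`Dom(Ȧ₁) ⊕ Dom(Ȧ₂) ∔ span{f}` is symmetric. -/
theorem statement0
    (B₁ : H₁ →ₗ.[ℂ] H₁) (B₂ : H₂ →ₗ.[ℂ] H₂)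
    (hd₁ : Dense (B₁.domain : Set H₁)) (hd₂ : Dense (B₂.domain : Set H₂))
    (hc₁ : B₁.IsClosed) (hc₂ : B₂.IsClosed)
    (hs₁ : IsSymmetricOp B₁) (hs₂ : IsSymmetricOp B₂)
    (hi₁ : HasDefIndicesOneOne B₁) (hi₂ : HasDefIndicesOneOne B₂)
    (gp₁ gm₁ : H₁) (gp₂ gm₂ : H₂)
    (hgp₁ : gp₁ ∈ defSet B₁ Complex.I) (hgm₁ : gm₁ ∈ defSet B₁ (-Complex.I))
    (hgp₂ : gp₂ ∈ defSet B₂ Complex.I) (hgm₂ : gm₂ ∈ defSet B₂ (-Complex.I))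
    (hnp₁ : ‖gp₁‖ = 1) (hnm₁ : ‖gm₁‖ = 1) (hnp₂ : ‖gp₂‖ = 1) (hnm₂ : ‖gm₂‖ = 1)
    (α β : ℝ) (hα : α ∈ Set.Ico 0 Real.pi) (hβ : β ∈ Set.Ico 0 Real.pi)
    (f : WithLp 2 (H₁ × H₂))
    (hf : f = pairL2 ((Real.sin α : ℂ) • gp₁ - (Real.sin β : ℂ) • gm₁)
      ((Real.cos α : ℂ) • gp₂ - (Real.cos β : ℂ) • gm₂)) :
    ∃ hfd : f ∈ (prodOp B₁ B₂).adjoint.domain,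
      (ip ((prodOp B₁ B₂).adjoint ⟨f, hfd⟩) f).im = 0 ∧
      IsSymmetricOp (((prodOp B₁ B₂).adjoint).domRestrict
        (prodDomain B₁ B₂ ⊔ Submodule.span ℂ {f})) := by
  subst hf
  have hA : Dense ((prodOp B₁ B₂).domain : Set (WithLp 2 (H₁ × H₂))) :=
    dense_prodDomain B₁ B₂ hd₁ hd₂
  obtain ⟨hp₁, ep₁⟩ := hgp₁
  obtain ⟨hm₁, em₁⟩ := hgm₁
  obtain ⟨hp₂, ep₂⟩ := hgp₂
  obtain ⟨hm₂, em₂⟩ := hgm₂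
  set f₁ : H₁ := (Real.sin α : ℂ) • gp₁ - (Real.sin β : ℂ) • gm₁ with hf₁def
  set f₂ : H₂ := (Real.cos α : ℂ) • gp₂ - (Real.cos β : ℂ) • gm₂ with hf₂def
  have hf₁ : f₁ ∈ B₁.adjoint.domain :=
    Submodule.sub_mem _ (Submodule.smul_mem _ _ hp₁) (Submodule.smul_mem _ _ hm₁)
  have hf₂ : f₂ ∈ B₂.adjoint.domain :=
    Submodule.sub_mem _ (Submodule.smul_mem _ _ hp₂) (Submodule.smul_mem _ _ hm₂)
  set w₁ : H₁ := Complex.I • ((Real.sin α : ℂ) • gp₁ + (Real.sin β : ℂ) • gm₁) with hw₁def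
  set w₂ : H₂ := Complex.I • ((Real.cos α : ℂ) • gp₂ + (Real.cos β : ℂ) • gm₂) with hw₂def
  have hBf₁ : B₁.adjoint ⟨f₁, hf₁⟩ = w₁ := by
    have hsplit : (⟨f₁, hf₁⟩ : B₁.adjoint.domain)
        = (Real.sin α : ℂ) • ⟨gp₁, hp₁⟩ - (Real.sin β : ℂ) • ⟨gm₁, hm₁⟩ := Subtype.ext rfl
    rw [hsplit, LinearPMap.map_sub, LinearPMap.map_smul, LinearPMap.map_smul, ep₁, em₁, hw₁def]
    module
  have hBf₂ : B₂.adjoint ⟨f₂, hf₂⟩ = w₂ := by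
    have hsplit : (⟨f₂, hf₂⟩ : B₂.adjoint.domain)
        = (Real.cos α : ℂ) • ⟨gp₂, hp₂⟩ - (Real.cos β : ℂ) • ⟨gm₂, hm₂⟩ := Subtype.ext rfl
    rw [hsplit, LinearPMap.map_sub, LinearPMap.map_smul, LinearPMap.map_smul, ep₂, em₂, hw₂def]
    module
  obtain ⟨hfd, hAf⟩ := pair_mem_adjoint_domain B₁ B₂ hd₁ hd₂ hf₁ hf₂
  rw [hBf₁, hBf₂] at hAf
  -- the imaginary part computation
  have h1 : (inner ℂ f₁ w₁ : ℂ)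
      = Complex.I * ((Real.sin α : ℂ)^2 - (Real.sin β : ℂ)^2
        + (Real.sin α : ℂ) * (Real.sin β : ℂ)
          * ((inner ℂ gp₁ gm₁ : ℂ) - (starRingEnd ℂ) (inner ℂ gp₁ gm₁ : ℂ))) := by
    simp only [hf₁def, hw₁def, inner_smul_right, inner_add_right, inner_sub_left,
      inner_smul_left, Complex.conj_ofReal, inner_self_eq_norm_sq_to_K, hnp₁, hnm₁,
      Complex.ofReal_one, ← inner_conj_symm gm₁ gp₁]
    norm_num
    ring
  have h2 : (inner ℂ f₂ w₂ : ℂ)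
      = Complex.I * ((Real.cos α : ℂ)^2 - (Real.cos β : ℂ)^2
        + (Real.cos α : ℂ) * (Real.cos β : ℂ)
          * ((inner ℂ gp₂ gm₂ : ℂ) - (starRingEnd ℂ) (inner ℂ gp₂ gm₂ : ℂ))) := by
    simp only [hf₂def, hw₂def, inner_smul_right, inner_add_right, inner_sub_left,
      inner_smul_left, Complex.conj_ofReal, inner_self_eq_norm_sq_to_K, hnp₂, hnm₂,
      Complex.ofReal_one, ← inner_conj_symm gm₂ gp₂]
    norm_num
    ring
  have hA1 : ((Real.sin α : ℂ))^2 + (Real.cos α : ℂ)^2 = 1 := by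
    exact_mod_cast congrArg (Complex.ofReal) (Real.sin_sq_add_cos_sq α)
  have hB1 : ((Real.sin β : ℂ))^2 + (Real.cos β : ℂ)^2 = 1 := by
    exact_mod_cast congrArg (Complex.ofReal) (Real.sin_sq_add_cos_sq β)
  have htot : (inner ℂ (pairL2 f₁ f₂) (pairL2 w₁ w₂) : ℂ)
      = (-2 : ℂ) * ((Real.sin α : ℂ) * (Real.sin β : ℂ) * ((inner ℂ gp₁ gm₁ : ℂ).im : ℂ)
          + (Real.cos α : ℂ) * (Real.cos β : ℂ) * ((inner ℂ gp₂ gm₂ : ℂ).im : ℂ)) := by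
    have hsum : (inner ℂ (pairL2 f₁ f₂) (pairL2 w₁ w₂) : ℂ)
        = (inner ℂ f₁ w₁ : ℂ) + (inner ℂ f₂ w₂ : ℂ) := rfl
    rw [hsum, h1, h2, Complex.sub_conj, Complex.sub_conj]
    simp only [Complex.ofReal_mul, Complex.ofReal_ofNat]
    linear_combination Complex.I * hA1 - Complex.I * hB1 +
      (2 * (Real.sin α : ℂ) * (Real.sin β : ℂ) * ((inner ℂ gp₁ gm₁ : ℂ).im : ℂ) +
        2 * (Real.cos α : ℂ) * (Real.cos β : ℂ) * ((inner ℂ gp₂ gm₂ : ℂ).im : ℂ)) * Complex.I_sq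
  have him : (inner ℂ (pairL2 f₁ f₂) (pairL2 w₁ w₂) : ℂ).im = 0 := by
    rw [htot]
    simp [Complex.mul_im, Complex.add_im, Complex.add_re, Complex.mul_re]
  have himip : (ip ((prodOp B₁ B₂).adjoint ⟨pairL2 f₁ f₂, hfd⟩) (pairL2 f₁ f₂)).im = 0 := by
    show (inner ℂ (pairL2 f₁ f₂) ((prodOp B₁ B₂).adjoint ⟨pairL2 f₁ f₂, hfd⟩) : ℂ).im = 0
    rw [hAf]; exact him
  -- symmetry of the product operator
  have hsym : (prodOp B₁ B₂).IsFormalAdjoint (prodOp B₁ B₂) := by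
    intro x y
    have e1 := hs₁ ⟨x.1.fst, x.2.1⟩ ⟨y.1.fst, y.2.1⟩
    have e2 := hs₂ ⟨x.1.snd, x.2.2⟩ ⟨y.1.snd, y.2.2⟩
    unfold ip at e1 e2
    have e1' := congrArg (starRingEnd ℂ) e1
    have e2' := congrArg (starRingEnd ℂ) e2
    rw [inner_conj_symm, inner_conj_symm] at e1'
    rw [inner_conj_symm, inner_conj_symm] at e2'
    show (inner ℂ (B₁ ⟨x.1.fst, x.2.1⟩ : H₁) ((⟨y.1.fst, y.2.1⟩ : B₁.domain) : H₁) : ℂ)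
        + (inner ℂ (B₂ ⟨x.1.snd, x.2.2⟩ : H₂) ((⟨y.1.snd, y.2.2⟩ : B₂.domain) : H₂) : ℂ)
      = (inner ℂ ((⟨x.1.fst, x.2.1⟩ : B₁.domain) : H₁) (B₁ ⟨y.1.fst, y.2.1⟩) : ℂ)
        + (inner ℂ ((⟨x.1.snd, x.2.2⟩ : B₂.domain) : H₂) (B₂ ⟨y.1.snd, y.2.2⟩) : ℂ)
    rw [e1', e2']
  have hform := LinearPMap.adjoint_isFormalAdjoint hA
  have hle : prodOp B₁ B₂ ≤ (prodOp B₁ B₂).adjoint := hsym.le_adjoint hA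
  refine ⟨hfd, himip, ?_⟩
  -- decomposition of elements of the extended domain
  have hdec : ∀ x : WithLp 2 (H₁ × H₂),
      x ∈ (prodDomain B₁ B₂ ⊔ Submodule.span ℂ {pairL2 f₁ f₂}) →
      ∃ (u : (prodOp B₁ B₂).domain) (a : ℂ),
        x = (u : WithLp 2 (H₁ × H₂)) + a • pairL2 f₁ f₂ := by
    intro x hx
    rcases Submodule.mem_sup.mp hx with ⟨u, hu, v, hv, hx'⟩
    rcases Submodule.mem_span_singleton.mp hv with ⟨a, ha⟩
    exact ⟨⟨u, hu⟩, a, by rw [← hx', ← ha]⟩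
  have k4 : (inner ℂ (pairL2 f₁ f₂) (pairL2 w₁ w₂) : ℂ) = inner ℂ (pairL2 w₁ w₂) (pairL2 f₁ f₂) :=
    (Complex.conj_eq_iff_im.mpr him).symm.trans (inner_conj_symm (pairL2 w₁ w₂) (pairL2 f₁ f₂))
  have key : ∀ (p q : (prodOp B₁ B₂).adjoint.domain),
      (p : WithLp 2 (H₁ × H₂)) ∈ (prodDomain B₁ B₂ ⊔ Submodule.span ℂ {pairL2 f₁ f₂}) →
      (q : WithLp 2 (H₁ × H₂)) ∈ (prodDomain B₁ B₂ ⊔ Submodule.span ℂ {pairL2 f₁ f₂}) →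
      (inner ℂ ((q : WithLp 2 (H₁ × H₂))) ((prodOp B₁ B₂).adjoint p) : ℂ) =
        inner ℂ ((prodOp B₁ B₂).adjoint q) ((p : WithLp 2 (H₁ × H₂))) := by
    intro p q hp hq
    obtain ⟨u, a, hu⟩ := hdec _ hp
    obtain ⟨v, b, hv⟩ := hdec _ hq
    have hpu : p = (⟨(u : WithLp 2 (H₁ × H₂)), hle.1 u.2⟩ : (prodOp B₁ B₂).adjoint.domain)
        + a • ⟨pairL2 f₁ f₂, hfd⟩ := Subtype.ext (by simpa using hu)
    have hqv : q = (⟨(v : WithLp 2 (H₁ × H₂)), hle.1 v.2⟩ : (prodOp B₁ B₂).adjoint.domain)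
        + b • ⟨pairL2 f₁ f₂, hfd⟩ := Subtype.ext (by simpa using hv)
    have hAu : (prodOp B₁ B₂).adjoint ⟨(u : WithLp 2 (H₁ × H₂)), hle.1 u.2⟩ = prodOp B₁ B₂ u :=
      (hle.2 rfl).symm
    have hAv : (prodOp B₁ B₂).adjoint ⟨(v : WithLp 2 (H₁ × H₂)), hle.1 v.2⟩ = prodOp B₁ B₂ v :=
      (hle.2 rfl).symm
    have k2 := hform ⟨pairL2 f₁ f₂, hfd⟩ u
    have k3 := hform ⟨pairL2 f₁ f₂, hfd⟩ v
    rw [hAf] at k2 k3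
    have k3' := congrArg (starRingEnd ℂ) k3
    rw [inner_conj_symm, inner_conj_symm] at k3'
    have k1 := hsym v u
    rw [hpu, hqv, LinearPMap.map_add, LinearPMap.map_smul, LinearPMap.map_add,
      LinearPMap.map_smul, hAu, hAv, hAf]
    simp only [Submodule.coe_add, Submodule.coe_smul, inner_add_left, inner_add_right,
      inner_smul_left, inner_smul_right]
    linear_combination -k1 + a * k3' - (starRingEnd ℂ) b * k2 + ((starRingEnd ℂ) b * a) * k4
  intro x y
  have hx := Submodule.mem_inf.mp x.2
  have hy := Submodule.mem_inf.mp y.2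
  have ex : ((prodOp B₁ B₂).adjoint.domRestrict
        (prodDomain B₁ B₂ ⊔ Submodule.span ℂ {pairL2 f₁ f₂})) x
      = (prodOp B₁ B₂).adjoint ⟨x.1, hx.2⟩ := LinearPMap.domRestrict_apply rfl
  have ey : ((prodOp B₁ B₂).adjoint.domRestrict
        (prodDomain B₁ B₂ ⊔ Submodule.span ℂ {pairL2 f₁ f₂})) y
      = (prodOp B₁ B₂).adjoint ⟨y.1, hy.2⟩ := LinearPMap.domRestrict_apply rfl
  unfold ip
  rw [ex, ey]
  exact key ⟨x.1, hx.2⟩ ⟨y.1, hy.2⟩ hx.1 hy.1
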